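/- Let n ≥ 1 and let z, z' ∈ ℝⁿ differ in at most one coordinate. Then the symmetry test statistic T(z) = d_KS(F̂_z, F̂_{−z}), where −z denotes the vector (−z_1, …, −z_n), satisfies |T(z) − T(z')| ≤ 2/n; i.e., the sensitivity of the paired-data Kolmogorov–Smirnov symmetry statistic is at most 2/n. -/

import Mathlib

open Filter

/-- Empirical cdf of a sample `x : Fin n → ℝ`. -/
noncomputable def ecdf {n : ℕ} (x : Fin n → ℝ) (t : ℝ) : ℝ :=
  (Finset.univ.filter (fun i => x i ≤ t)).card / n

/-- Kolmogorov–Smirnov distance. -/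
noncomputable def dKS (F G : ℝ → ℝ) : ℝ := ⨆ t : ℝ, |F t - G t|

lemma ecdf_nonneg {n : ℕ} (x : Fin n → ℝ) (t : ℝ) : 0 ≤ ecdf x t := by
  unfold ecdf; positivity

lemma ecdf_le_one {n : ℕ} (x : Fin n → ℝ) (t : ℝ) : ecdf x t ≤ 1 := by
  unfold ecdf
  rcases Nat.eq_zero_or_pos n with h | h
  · simp [h]
  · rw [div_le_one (by positivity)]
    exact_mod_cast (Finset.card_filter_le _ _).trans (by simp)

lemma ecdf_close {n : ℕ} (z z' : Fin n → ℝ) (hadj : hammingDist z z' ≤ 1) (t : ℝ) :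
    |ecdf z t - ecdf z' t| ≤ 1 / n := by
  have key : ∀ (a b : Fin n → ℝ), hammingDist a b ≤ 1 →
      ((Finset.univ.filter (fun i => a i ≤ t)).card : ℝ) ≤
        (Finset.univ.filter (fun i => b i ≤ t)).card + 1 := by
    intro a b hab
    have hsub : (Finset.univ.filter (fun i => a i ≤ t)) ⊆
        (Finset.univ.filter (fun i => b i ≤ t)) ∪
          (Finset.univ.filter (fun i => a i ≠ b i)) := by
      intro i hi
      simp only [Finset.mem_filter, Finset.mem_union, Finset.mem_univ, true_and] at *
      by_cases h : a i = b i
      · exact Or.inl (h ▸ hi)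
      · exact Or.inr h
    have := (Finset.card_le_card hsub).trans (Finset.card_union_le _ _)
    have hd : (Finset.univ.filter (fun i => a i ≠ b i)).card ≤ 1 := hab
    have : (Finset.univ.filter (fun i => a i ≤ t)).card ≤
        (Finset.univ.filter (fun i => b i ≤ t)).card + 1 := this.trans (by omega)
    exact_mod_cast this
  rcases Nat.eq_zero_or_pos n with h | h
  · subst h; simp [ecdf]
  have h1 := key z z' hadj
  have h2 := key z' z (by rwa [hammingDist_comm])
  unfold ecdf
  rw [abs_le]
  have hn : (0:ℝ) < n := by exact_mod_cast h
  constructor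
  · rw [neg_le, ← sub_div, ← neg_div, div_le_div_iff₀ hn hn] <;> nlinarith
  · rw [← sub_div, div_le_div_iff₀ hn hn]; nlinarith

lemma dKS_bdd {F G : ℝ → ℝ} (hF0 : ∀ t, 0 ≤ F t) (hF1 : ∀ t, F t ≤ 1)
    (hG0 : ∀ t, 0 ≤ G t) (hG1 : ∀ t, G t ≤ 1) :
    BddAbove (Set.range fun t => |F t - G t|) := by
  refine ⟨1, ?_⟩
  rintro y ⟨t, rfl⟩
  rw [abs_le]
  constructor <;> nlinarith [hF0 t, hF1 t, hG0 t, hG1 t]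

lemma dKS_le {F G F' G' : ℝ → ℝ} (c : ℝ)
    (hb : BddAbove (Set.range fun t => |F' t - G' t|))
    (h : ∀ t, |F t - G t| ≤ |F' t - G' t| + c) : dKS F G ≤ dKS F' G' + c := by
  apply ciSup_le
  intro t
  exact (h t).trans (add_le_add_left (le_ciSup hb t) c)

theorem symmetry_KS_sensitivity {n : ℕ} (hn : 1 ≤ n) (z z' : Fin n → ℝ)
    (hadj : hammingDist z z' ≤ 1) :
    |dKS (ecdf z) (ecdf (fun i => -z i)) -
      dKS (ecdf z') (ecdf (fun i => -z' i))| ≤ 2 / n := by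
  have hadj' : hammingDist (fun i => -z i) (fun i => -z' i) ≤ 1 := by
    have : hammingDist (fun i => -z i) (fun i => -z' i) = hammingDist z z' := by
      unfold hammingDist
      congr 1
      apply Finset.filter_congr
      intro i _
      simp
    omega
  have hc1 := ecdf_close z z' hadj
  have hc2 := ecdf_close _ _ hadj'
  have hc1' := ecdf_close z' z (by rwa [hammingDist_comm])
  have hc2' := ecdf_close _ _ (by rwa [hammingDist_comm] : hammingDist (fun i => -z' i) (fun i => -z i) ≤ 1)
  have key : ∀ (F G F' G' : ℝ → ℝ), (∀ t, |F t - F' t| ≤ 1/n) → (∀ t, |G t - G' t| ≤ 1/n) →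
      ∀ t, |F t - G t| ≤ |F' t - G' t| + 2/n := by
    intro F G F' G' h1 h2 t
    have a1 := abs_sub_le (F t) (F' t) (G t)
    have a2 := abs_sub_le (F' t) (G' t) (G t)
    have a3 : |G' t - G t| = |G t - G' t| := abs_sub_comm _ _
    have := h1 t; have := h2 t
    have h2n : 2/(n:ℝ) = 1/n + 1/n := by ring
    linarith
  rw [abs_le]
  constructor
  · rw [neg_le, neg_sub]
    exact sub_le_iff_le_add.mpr ((dKS_le _ (dKS_bdd (ecdf_nonneg _) (ecdf_le_one _) (ecdf_nonneg _) (ecdf_le_one _)) (key _ _ _ _ hc1' hc2')).trans_eq (add_comm _ _))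
  · exact sub_le_iff_le_add.mpr ((dKS_le _ (dKS_bdd (ecdf_nonneg _) (ecdf_le_one _) (ecdf_nonneg _) (ecdf_le_one _)) (key _ _ _ _ hc1 hc2)).trans_eq (add_comm _ _))
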